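/- Let G be a Cayley graph Cay(Γ, A) on a finite group Γ with symmetric generating set A of size d, and suppose S ⊆ Γ is a clique in G with |S| ≥ 2. Then there exists a nonidentity element t ∈ Γ such that |(tS) ∩ S| ≥ |S|(|S|−1)/d. -/

import Mathlib

open Pointwise

/-- Let `Cay(Γ, A)` be a Cayley graph on a finite group `Γ` with symmetric generating set
`A` of size `d` (with `1 ∉ A`), and let `S` be a clique of size at least `2` (i.e. `s s'⁻¹ ∈ A`
for all distinct `s, s' ∈ S`). Then there is a nonidentity `t ∈ Γ` with
`|(tS) ∩ S| ≥ |S|(|S|-1)/d`. -/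
theorem cayley_clique_translate {Γ : Type*} [Group Γ] [Fintype Γ] [DecidableEq Γ]
    (A : Finset Γ) (d : ℕ) (hd : A.card = d)
    (hsym : ∀ a ∈ A, a⁻¹ ∈ A) (hone : (1 : Γ) ∉ A)
    (S : Finset Γ) (hS : ∀ s ∈ S, ∀ s' ∈ S, s ≠ s' → s * s'⁻¹ ∈ A)
    (hS2 : 2 ≤ S.card) :
    ∃ t : Γ, t ≠ 1 ∧ (S.card : ℝ) * ((S.card : ℝ) - 1) / d ≤ ((t • S ∩ S).card : ℝ) := by
  -- A is nonempty
  obtain ⟨s, hs, s', hs', hne⟩ := Finset.one_lt_card.mp hS2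
  have hAne : A.Nonempty := ⟨s * s'⁻¹, hS s hs s' hs' hne⟩
  have hd0 : 0 < d := hd ▸ Finset.card_pos.mpr hAne
  -- key counting: |S|(|S|-1) ≤ ∑_{t∈A} |tS ∩ S|
  have hkey : S.offDiag.card ≤ ∑ t ∈ A, (t • S ∩ S).card := by
    rw [← Finset.card_sigma]
    apply Finset.card_le_card_of_injOn (fun p => ⟨p.1 * p.2⁻¹, p.1⟩)
    · rintro ⟨x, y⟩ hp
      rw [Finset.mem_coe, Finset.mem_offDiag] at hp
      obtain ⟨hx, hy, hxy⟩ := hp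
      refine Finset.mem_sigma.mpr ⟨hS x hx y hy hxy, Finset.mem_inter.mpr ⟨?_, hx⟩⟩
      refine Finset.mem_smul_finset.mpr ⟨y, hy, ?_⟩
      simp [mul_assoc]
    · rintro ⟨x, y⟩ _ ⟨x', y'⟩ _ h
      simp only [Sigma.mk.inj_iff, heq_eq_eq] at h
      obtain ⟨h1, h2⟩ := h
      subst h2
      have : y = y' := by
        have := mul_left_cancel h1
        exact inv_injective this
      simp [this]
  -- pick a good t
  by_contra hcon
  push_neg at hcon
  have hlt : ∀ t ∈ A, ((t • S ∩ S).card : ℝ) < (S.card : ℝ) * ((S.card : ℝ) - 1) / d := by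
    intro t ht
    exact hcon t (fun h => hone (h ▸ ht))
  have hsum : ((∑ t ∈ A, (t • S ∩ S).card : ℕ) : ℝ) < d * ((S.card : ℝ) * ((S.card : ℝ) - 1) / d) := by
    push_cast
    calc ∑ t ∈ A, ((t • S ∩ S).card : ℝ) < ∑ t ∈ A, (S.card : ℝ) * ((S.card : ℝ) - 1) / d :=
          Finset.sum_lt_sum_of_nonempty hAne hlt
      _ = d * ((S.card : ℝ) * ((S.card : ℝ) - 1) / d) := by
          rw [Finset.sum_const, hd, nsmul_eq_mul]
  rw [mul_div_cancel₀ _ (by positivity : (d : ℝ) ≠ 0)] at hsum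
  have hoff : ((S.offDiag.card : ℕ) : ℝ) = (S.card : ℝ) * ((S.card : ℝ) - 1) := by
    rw [Finset.offDiag_card, Nat.cast_sub (Nat.le_mul_of_pos_left _ (by omega))]
    push_cast; ring
  have := (Nat.cast_le (α := ℝ)).mpr hkey
  rw [hoff] at this
  linarith
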